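/- Let τ₁ = (𝒟₁^{≤0}, 𝒟₁^{≥0}) and τ₂ = (𝒟₂^{≤0}, 𝒟₂^{≥0}) be two t-structures on a pretriangulated category 𝒟, with hearts 𝒟^{♥₁} and 𝒟^{♥₂}. Then the inclusions 𝒟₁^{≤-1} ⊆ 𝒟₂^{≤0} ⊆ 𝒟₁^{≤0} hold if and only if the following two conditions hold for the classes 𝒯 := 𝒟^{♥₁} ∩ 𝒟₂^{≤0} and ℱ := 𝒟^{♥₁} ∩ 𝒟₂^{≥1}: (a) (𝒯, ℱ) is a torsion pair on the heart 𝒟^{♥₁}, i.e. Hom_𝒟(T, F) = 0 for all T ∈ 𝒯, F ∈ ℱ, and every X ∈ 𝒟^{♥₁} fits into a distinguished triangle T → X → F → T[1] with T ∈ 𝒯 and F ∈ ℱ; and (b) τ₂ is the tilting of τ₁ with respect to (𝒯, ℱ): 𝒟₂^{≤0} = {X ∈ 𝒟₁^{≤0} : there exists a distinguished triangle A → X → T → A[1] with A ∈ 𝒟₁^{≤-1} and T ∈ 𝒯} and 𝒟₂^{≥0} = {X ∈ 𝒟₁^{≥-1} : there exists a distinguished triangle F[1] → X → B → F[2] with F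 ∈ ℱ and B ∈ 𝒟₁^{≥0}}. -/

import Mathlib

open CategoryTheory CategoryTheory.Limits CategoryTheory.Pretriangulated

universe v u

variable (C : Type u) [Category.{v} C] [HasZeroObject C] [Preadditive C] [HasShift C ℤ]
  [∀ n : ℤ, (shiftFunctor C n).Additive] [Pretriangulated C]

/-- A t-structure on a pretriangulated category `C`, given by the two isomorphism-closed
classes `le` (the objects of `𝒟^{≤0}`) and `ge` (the objects of `𝒟^{≥0}`).  With the
convention that `X ∈ 𝒟^{≤n} ↔ le (X⟦n⟧)` and `X ∈ 𝒟^{≥n} ↔ ge (X⟦n⟧)`, the axioms read: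
`𝒟^{≤-1} ⊆ 𝒟^{≤0}` (equivalently `𝒟^{≤0}[1] ⊆ 𝒟^{≤0}`), `𝒟^{≥1} ⊆ 𝒟^{≥0}` (equivalently
`𝒟^{≥0}[-1] ⊆ 𝒟^{≥0}`), `Hom(X, Y) = 0` for `X ∈ 𝒟^{≤0}` and `Y ∈ 𝒟^{≥1}`, and every
object sits in a distinguished triangle `A → X → B → A[1]` with `A ∈ 𝒟^{≤0}`,
`B ∈ 𝒟^{≥1}`. -/
structure TStruct where
  /-- the class `𝒟^{≤0}` -/
  le : C → Prop
  /-- the class `𝒟^{≥0}` -/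
  ge : C → Prop
  le_iso_closed : ∀ {X Y : C}, (X ≅ Y) → le X → le Y
  ge_iso_closed : ∀ {X Y : C}, (X ≅ Y) → ge X → ge Y
  le_shift : ∀ X : C, le X → le (X⟦(1 : ℤ)⟧)
  ge_shift : ∀ X : C, ge X → ge (X⟦(-1 : ℤ)⟧)
  hom_vanish : ∀ {X Y : C}, le X → ge (Y⟦(1 : ℤ)⟧) → ∀ f : X ⟶ Y, f = 0
  exists_triangle : ∀ X : C, ∃ (A B : C) (f : A ⟶ X) (g : X ⟶ B) (h : B ⟶ A⟦(1 : ℤ)⟧),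
    (Triangle.mk f g h ∈ distTriang C) ∧ le A ∧ ge (B⟦(1 : ℤ)⟧)

variable {C}

/-- The heart `𝒟^♥ = 𝒟^{≤0} ∩ 𝒟^{≥0}` of a t-structure. -/
def TStruct.heart (t : TStruct C) (X : C) : Prop := t.le X ∧ t.ge X

/-- A torsion pair `(𝒯, ℱ)` on the heart of a t-structure: two isomorphism-closed classes
of objects of the heart such that `Hom(T, F) = 0` for `T ∈ 𝒯`, `F ∈ ℱ`, and every object
of the heart sits in a distinguished triangle `T → X → F → T[1]` with `T ∈ 𝒯`, `F ∈ ℱ`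
(i.e. a short exact sequence `0 → T → X → F → 0` in the heart). -/
structure HeartTorsionPair (t : TStruct C) where
  /-- the torsion class -/
  torsion : C → Prop
  /-- the torsion-free class -/
  free : C → Prop
  torsion_mem_heart : ∀ X : C, torsion X → t.heart X
  free_mem_heart : ∀ X : C, free X → t.heart X
  torsion_iso_closed : ∀ {X Y : C}, (X ≅ Y) → torsion X → torsion Y
  free_iso_closed : ∀ {X Y : C}, (X ≅ Y) → free X → free Y
  hom_vanish : ∀ {T F : C}, torsion T → free F → ∀ f : T ⟶ F, f = 0
  exists_triangle : ∀ X : C, t.heart X →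
    ∃ (T F : C) (f : T ⟶ X) (g : X ⟶ F) (h : F ⟶ T⟦(1 : ℤ)⟧),
      (Triangle.mk f g h ∈ distTriang C) ∧ torsion T ∧ free F

/-- The connective part `𝒟_υ^{≤0}` of the tilting of a t-structure `t` with respect to a
torsion class `torsion` on its heart: those `X ∈ 𝒟^{≤0}` fitting in a distinguished
triangle `A → X → T → A[1]` with `A ∈ 𝒟^{≤-1}` and `T` torsion. -/
def TiltLE (t : TStruct C) (torsion : C → Prop) (X : C) : Prop :=
  t.le X ∧ ∃ (A T : C) (f : A ⟶ X) (g : X ⟶ T) (h : T ⟶ A⟦(1 : ℤ)⟧),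
    (Triangle.mk f g h ∈ distTriang C) ∧ t.le (A⟦(-1 : ℤ)⟧) ∧ torsion T

/-- The coconnective part `𝒟_υ^{≥0}` of the tilting of a t-structure `t` with respect to a
torsion-free class `free` on its heart: those `X ∈ 𝒟^{≥-1}` fitting in a distinguished
triangle `F[1] → X → B → F[2]` with `F` torsion-free and `B ∈ 𝒟^{≥0}`. -/
def TiltGE (t : TStruct C) (free : C → Prop) (X : C) : Prop :=
  t.ge (X⟦(-1 : ℤ)⟧) ∧ ∃ (F B : C) (f : F⟦(1 : ℤ)⟧ ⟶ X) (g : X ⟶ B)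
    (h : B ⟶ (F⟦(1 : ℤ)⟧)⟦(1 : ℤ)⟧),
    (Triangle.mk f g h ∈ distTriang C) ∧ free F ∧ t.ge B

/-! ### Auxiliary lemmas -/

open ZeroObject

/-- The canonical isomorphism `X⟦-1⟧⟦1⟧ ≅ X`. -/
noncomputable def negOneOne (X : C) : (X⟦(-1 : ℤ)⟧)⟦(1 : ℤ)⟧ ≅ X :=
  (shiftEquiv C (1 : ℤ)).counitIso.app X

/-- The canonical isomorphism `X⟦1⟧⟦-1⟧ ≅ X`. -/
noncomputable def oneNegOne (X : C) : (X⟦(1 : ℤ)⟧)⟦(-1 : ℤ)⟧ ≅ X :=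
  ((shiftEquiv C (1 : ℤ)).unitIso.app X).symm

/-- Replacing the middle object of a distinguished triangle by an isomorphic object. -/
lemma distTriang_iso₂ (T : Triangle C) (hT : T ∈ distTriang C) {X : C} (e : T.obj₂ ≅ X) :
    Triangle.mk (T.mor₁ ≫ e.hom) (e.inv ≫ T.mor₂) T.mor₃ ∈ distTriang C :=
  isomorphic_distinguished _ hT _
    (Triangle.isoMk _ _ (Iso.refl _) e.symm (Iso.refl _) (by exact (by simp : (T.mor₁ ≫ e.hom) ≫ e.inv = 𝟙 T.obj₁ ≫ T.mor₁))
      (by exact (by simp : (e.inv ≫ T.mor₂) ≫ 𝟙 T.obj₃ = e.inv ≫ T.mor₂))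
      (by exact (by simp : T.mor₃ ≫ (shiftFunctor C 1).map (𝟙 T.obj₁) = 𝟙 T.obj₃ ≫ T.mor₃)))

namespace TStruct

variable (t : TStruct C)

/-- `Hom(𝒟^{≤-1}, 𝒟^{≥0}) = 0`. -/
lemma homZero' {X Y : C} (hX : t.le X) (hY : t.ge Y) (f : X⟦(1 : ℤ)⟧ ⟶ Y) : f = 0 := by
  rw [← (shiftFunctor C (-1 : ℤ)).map_eq_zero_iff]
  have h0 : (oneNegOne X).inv ≫ f⟦(-1 : ℤ)⟧' = 0 :=
    t.hom_vanish hX (t.ge_iso_closed (negOneOne Y).symm hY) _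
  calc f⟦(-1 : ℤ)⟧' = (oneNegOne X).hom ≫ ((oneNegOne X).inv ≫ f⟦(-1 : ℤ)⟧') := by simp
    _ = 0 := by rw [h0, comp_zero]

/-- `𝒟^{≥1} ⊆ 𝒟^{≥0}`, in a convenient form. -/
lemma ge_down {B : C} (hB : t.ge (B⟦(1 : ℤ)⟧)) : t.ge B :=
  t.ge_iso_closed (oneNegOne B) (t.ge_shift _ hB)

/-- Left orthogonality characterization of `𝒟^{≤0}`. -/
lemma le_of_orth {X : C}
    (H : ∀ (Y : C), t.ge (Y⟦(1 : ℤ)⟧) → ∀ f : X ⟶ Y, f = 0) : t.le X := by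
  obtain ⟨A, B, f, g, h, hd, hA, hB⟩ := t.exists_triangle X
  obtain ⟨ψ, hψ⟩ := Triangle.yoneda_exact₂ _ (rot_of_distTriang _ hd) (𝟙 B)
    (by change g ≫ 𝟙 B = 0; rw [H B hB g, zero_comp])
  have hB0 : IsZero B := by
    rw [IsZero.iff_id_eq_zero, hψ, t.hom_vanish (t.le_shift A hA) hB ψ]; exact comp_zero
  have : IsIso f := (Triangle.isZero₃_iff_isIso₁ _ hd).1 hB0
  exact t.le_iso_closed (asIso f) hA

/-- Right orthogonality characterization of `𝒟^{≥1}`. -/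
lemma ge_of_orth {Y : C}
    (H : ∀ (X : C), t.le X → ∀ f : X ⟶ Y, f = 0) : t.ge (Y⟦(1 : ℤ)⟧) := by
  obtain ⟨A, B, f, g, h, hd, hA, hB⟩ := t.exists_triangle Y
  obtain ⟨ψ, hψ⟩ := Triangle.coyoneda_exact₂ _ (inv_rot_of_distTriang _ hd) (𝟙 A)
    (by change 𝟙 A ≫ f = 0; rw [H A hA f, comp_zero])
  have hA0 : IsZero A := by
    rw [IsZero.iff_id_eq_zero, hψ,
      t.hom_vanish hA (t.ge_iso_closed (negOneOne B).symm (t.ge_down hB)) ψ]; exact zero_comp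
  have : IsIso g := (Triangle.isZero₁_iff_isIso₂ _ hd).1 hA0
  exact t.ge_iso_closed ((shiftFunctor C (1 : ℤ)).mapIso (asIso g)).symm hB

/-- `𝒟^{≤0}` contains the zero objects. -/
lemma le_of_isZero {X : C} (hX : IsZero X) : t.le X :=
  t.le_of_orth (fun _ _ f => hX.eq_of_src f 0)

/-- `𝒟^{≥0}` contains the zero objects. -/
lemma ge_of_isZero {X : C} (hX : IsZero X) : t.ge X := by
  have h1 : IsZero (X⟦(-1 : ℤ)⟧) := by
    rw [IsZero.iff_id_eq_zero] at hX ⊢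
    have he : 𝟙 (X⟦(-1 : ℤ)⟧) = (shiftFunctor C (-1 : ℤ)).map (𝟙 X) :=
      (CategoryTheory.Functor.map_id _ _).symm
    rw [he, hX, Functor.map_zero]
  exact t.ge_iso_closed (negOneOne X) (t.ge_of_orth (fun _ _ f => h1.eq_of_tgt f 0))

/-- `𝒟^{≤0}` is closed under extensions. -/
lemma le_ext₂ (T : Triangle C) (hT : T ∈ distTriang C) (h₁ : t.le T.obj₁)
    (h₃ : t.le T.obj₃) : t.le T.obj₂ := by
  apply t.le_of_orth
  intro Y hY f
  obtain ⟨g, hg⟩ := Triangle.yoneda_exact₂ T hT f (t.hom_vanish h₁ hY _)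
  rw [hg, t.hom_vanish h₃ hY g, comp_zero]

/-- `𝒟^{≥0}` is closed under extensions. -/
lemma ge_ext₂ (T : Triangle C) (hT : T ∈ distTriang C) (h₁ : t.ge T.obj₁)
    (h₃ : t.ge T.obj₃) : t.ge T.obj₂ := by
  apply t.ge_iso_closed (negOneOne T.obj₂)
  apply t.ge_of_orth
  intro Z hZ φ
  rw [← (shiftFunctor C (1 : ℤ)).map_eq_zero_iff]
  obtain ⟨ψ, hψ⟩ := Triangle.coyoneda_exact₂ T hT (φ⟦(1 : ℤ)⟧' ≫ (negOneOne T.obj₂).hom)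
    (by rw [Category.assoc]; exact t.homZero' hZ h₃ _)
  have h0 : φ⟦(1 : ℤ)⟧' ≫ (negOneOne T.obj₂).hom = 0 := by
    rw [hψ, t.homZero' hZ h₁ ψ, zero_comp]
  calc φ⟦(1 : ℤ)⟧'
      = (φ⟦(1 : ℤ)⟧' ≫ (negOneOne T.obj₂).hom) ≫ (negOneOne T.obj₂).inv := by simp
    _ = 0 := by rw [h0, zero_comp]

end TStruct

/-- If `𝒟₁^{≤-1} ⊆ 𝒟₂^{≤0}` then `𝒟₂^{≥1} ⊆ 𝒟₁^{≥0}`. -/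
lemma ge_incl (t₁ t₂ : TStruct C) (h1 : ∀ X : C, t₁.le (X⟦(-1 : ℤ)⟧) → t₂.le X)
    {Y : C} (hY : t₂.ge (Y⟦(1 : ℤ)⟧)) : t₁.ge Y := by
  apply t₁.ge_iso_closed (negOneOne Y)
  apply t₁.ge_of_orth
  intro X hX f
  rw [← (shiftFunctor C (1 : ℤ)).map_eq_zero_iff]
  have h0 : f⟦(1 : ℤ)⟧' ≫ (negOneOne Y).hom = 0 :=
    t₂.hom_vanish (h1 _ (t₁.le_iso_closed (oneNegOne X).symm hX)) hY _
  calc f⟦(1 : ℤ)⟧' = (f⟦(1 : ℤ)⟧' ≫ (negOneOne Y).hom) ≫ (negOneOne Y).inv := by simp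
    _ = 0 := by rw [h0, zero_comp]

/-- If `𝒟₂^{≤0} ⊆ 𝒟₁^{≤0}` then `𝒟₁^{≥0} ⊆ 𝒟₂^{≥0}`. -/
lemma ge_incl' (t₁ t₂ : TStruct C) (h2 : ∀ X : C, t₂.le X → t₁.le X)
    {B : C} (hB : t₁.ge B) : t₂.ge B := by
  apply t₂.ge_iso_closed (negOneOne B)
  apply t₂.ge_of_orth
  intro W hW φ
  rw [← (shiftFunctor C (1 : ℤ)).map_eq_zero_iff]
  have h0 : φ⟦(1 : ℤ)⟧' ≫ (negOneOne B).hom = 0 := t₁.homZero' (h2 W hW) hB _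
  calc φ⟦(1 : ℤ)⟧' = (φ⟦(1 : ℤ)⟧' ≫ (negOneOne B).hom) ≫ (negOneOne B).inv := by simp
    _ = 0 := by rw [h0, zero_comp]

/-- Polishchuk's lemma: two t-structures `τ₁, τ₂` satisfy
`𝒟₁^{≤-1} ⊆ 𝒟₂^{≤0} ⊆ 𝒟₁^{≤0}` if and only if, setting `𝒯 := 𝒟^{♥₁} ∩ 𝒟₂^{≤0}` and
`ℱ := 𝒟^{♥₁} ∩ 𝒟₂^{≥1}`, the pair `(𝒯, ℱ)` is a torsion pair on the heart of `τ₁` and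
`τ₂` is the tilting of `τ₁` with respect to `(𝒯, ℱ)`.
(Here `X ∈ 𝒟₁^{≤-1} ↔ X⟦-1⟧ ∈ 𝒟₁^{≤0}` and `X ∈ 𝒟₂^{≥1} ↔ X⟦1⟧ ∈ 𝒟₂^{≥0}`.) -/
theorem tStructure_tilting_iff (t₁ t₂ : TStruct C) :
    ((∀ X : C, t₁.le (X⟦(-1 : ℤ)⟧) → t₂.le X) ∧ (∀ X : C, t₂.le X → t₁.le X)) ↔
    ((∀ {T F : C}, (t₁.heart T ∧ t₂.le T) → (t₁.heart F ∧ t₂.ge (F⟦(1 : ℤ)⟧)) →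
        ∀ f : T ⟶ F, f = 0) ∧
     (∀ X : C, t₁.heart X →
        ∃ (T F : C) (f : T ⟶ X) (g : X ⟶ F) (h : F ⟶ T⟦(1 : ℤ)⟧),
          (Triangle.mk f g h ∈ distTriang C) ∧ (t₁.heart T ∧ t₂.le T) ∧
            (t₁.heart F ∧ t₂.ge (F⟦(1 : ℤ)⟧))) ∧
     (∀ X : C, t₂.le X ↔ TiltLE t₁ (fun T => t₁.heart T ∧ t₂.le T) X) ∧
     (∀ X : C, t₂.ge X ↔ TiltGE t₁ (fun F => t₁.heart F ∧ t₂.ge (F⟦(1 : ℤ)⟧)) X)) := by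
  constructor
  · rintro ⟨h1, h2⟩
    refine ⟨?_, ?_, ?_, ?_⟩
    · intro T F hT hF f
      exact t₂.hom_vanish hT.2 hF.2 f
    · -- the torsion pair triangle
      intro X hX
      obtain ⟨A, B, f, g, h, hd, hA, hB⟩ := t₂.exists_triangle X
      have hA1 : t₁.le A := h2 A hA
      have hB1ge : t₁.ge B := ge_incl t₁ t₂ h1 hB
      have hBle : t₁.le B :=
        t₁.le_ext₂ _ (rot_of_distTriang _ hd) hX.1 (t₁.le_shift A hA1)
      have hAge : t₁.ge A :=
        t₁.ge_ext₂ _ (inv_rot_of_distTriang _ hd) (t₁.ge_shift B hB1ge) hX.2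
      exact ⟨A, B, f, g, h, hd, ⟨⟨hA1, hAge⟩, hA⟩, ⟨⟨hBle, hB1ge⟩, hB⟩⟩
    · -- description of `𝒟₂^{≤0}`
      intro X
      constructor
      · intro hX
        obtain ⟨A', B', f, g, h, hd, hA', hB'⟩ := t₁.exists_triangle (X⟦(-1 : ℤ)⟧)
        set T := (Triangle.shiftFunctor C (1 : ℤ)).obj (Triangle.mk f g h) with hTdef
        have hT : Triangle.mk (T.mor₁ ≫ (negOneOne X).hom) ((negOneOne X).inv ≫ T.mor₂)
            T.mor₃ ∈ distTriang C :=
          distTriang_iso₂ _ (Triangle.shift_distinguished _ hd 1) (negOneOne X)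
        refine ⟨h2 X hX, A'⟦(1 : ℤ)⟧, B'⟦(1 : ℤ)⟧, T.mor₁ ≫ (negOneOne X).hom,
          (negOneOne X).inv ≫ T.mor₂, T.mor₃, hT,
          t₁.le_iso_closed (oneNegOne A').symm hA', ⟨⟨?_, hB'⟩, ?_⟩⟩
        · exact t₁.le_ext₂ _ (rot_of_distTriang _ hT) (h2 X hX)
            (t₁.le_shift _ (t₁.le_shift _ hA'))
        · exact t₂.le_ext₂ _ (rot_of_distTriang _ hT) hX
            (h1 _ (t₁.le_iso_closed (oneNegOne (A'⟦(1 : ℤ)⟧)).symm (t₁.le_shift _ hA')))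
      · rintro ⟨hXle, A, T', f, g, h, hd, hA, hT'⟩
        exact t₂.le_ext₂ _ hd (h1 A hA) hT'.2
    · -- description of `𝒟₂^{≥0}`
      intro X
      constructor
      · intro hX
        obtain ⟨A', B', f, g, h, hd, hA', hB'⟩ := t₁.exists_triangle (X⟦(-1 : ℤ)⟧)
        have hX1 : t₁.ge (X⟦(-1 : ℤ)⟧) :=
          ge_incl t₁ t₂ h1 (t₂.ge_iso_closed (negOneOne X).symm hX)
        have hB'ge : t₁.ge B' := t₁.ge_down hB'
        have hA'ge : t₁.ge A' :=
          t₁.ge_ext₂ _ (inv_rot_of_distTriang _ hd) (t₁.ge_shift B' hB'ge) hX1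
        have hA'2 : t₂.ge (A'⟦(1 : ℤ)⟧) := by
          apply t₂.ge_of_orth
          intro W hW φ
          obtain ⟨ψ, hψ⟩ := Triangle.coyoneda_exact₂ _ (inv_rot_of_distTriang _ hd) φ
            (t₂.hom_vanish hW (t₂.ge_iso_closed (negOneOne X).symm hX) _)
          rw [hψ, t₁.hom_vanish (h2 W hW)
            (t₁.ge_iso_closed (negOneOne B').symm hB'ge) ψ]; exact zero_comp
        set T := (Triangle.shiftFunctor C (1 : ℤ)).obj (Triangle.mk f g h) with hTdef
        have hT : Triangle.mk (T.mor₁ ≫ (negOneOne X).hom) ((negOneOne X).inv ≫ T.mor₂)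
            T.mor₃ ∈ distTriang C :=
          distTriang_iso₂ _ (Triangle.shift_distinguished _ hd 1) (negOneOne X)
        exact ⟨hX1, A', B'⟦(1 : ℤ)⟧, T.mor₁ ≫ (negOneOne X).hom,
          (negOneOne X).inv ≫ T.mor₂, T.mor₃, hT, ⟨⟨hA', hA'ge⟩, hA'2⟩, hB'⟩
      · rintro ⟨hXge, F, B, f, g, h, hd, hF, hB⟩
        exact t₂.ge_ext₂ _ hd hF.2 (ge_incl' t₁ t₂ h2 hB)
  · rintro ⟨hv, hex, hle, hge⟩
    constructor
    · intro X hX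
      refine (hle X).2 ⟨t₁.le_iso_closed (negOneOne X) (t₁.le_shift _ hX),
        X, 0, 𝟙 X, 0, 0, contractible_distinguished X, hX,
        ⟨⟨t₁.le_of_isZero (isZero_zero C), t₁.ge_of_isZero (isZero_zero C)⟩,
          t₂.le_of_isZero (isZero_zero C)⟩⟩
    · intro X hX
      exact ((hle X).1 hX).1
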